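/- Let ρ ∈ (0,1] and let G be a finite group. If G has an automorphism α such that α(g) = g² for at least ρ·|G| many elements g of G, then the derived length of the solvable radical of G satisfies dl(Rad(G)) ≤ 2·log_{3/4}(ρ) + 1, where the logarithm is taken to base 3/4. -/

import Mathlib

/-- The solvable radical of a group: the join of all solvable normal subgroups.
For finite groups this is the unique largest solvable normal subgroup. -/
def solvableRadical (G : Type*) [Group G] : Subgroup G :=
  sSup {H : Subgroup G | H.Normal ∧ IsSolvable H}

/-- The derived length of a group: the least `n` with `derivedSeries G n = ⊥`. -/
noncomputable def derivedLength (G : Type*) [Group G] : ℕ :=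
  sInf {n : ℕ | derivedSeries G n = ⊥}


open Subgroup Pointwise Finset

variable {G : Type*} [Group G]

lemma sup_solvable (H K : Subgroup G) [hHn : H.Normal] [hKn : K.Normal]
    [hH : Group.IsSolvable H] [hK : Group.IsSolvable K] : IsSolvable ↥(H ⊔ K) := by
  set L := H ⊔ K with hL
  haveI : (H.subgroupOf L).Normal := hHn.subgroupOf L
  -- surjection from K onto L ⧸ H.subgroupOf L
  have hsurj : Function.Surjective
      ((QuotientGroup.mk' (H.subgroupOf L)).comp (inclusion (le_sup_right : K ≤ L))) := by
    intro x
    obtain ⟨y, rfl⟩ := QuotientGroup.mk'_surjective (H.subgroupOf L) x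
    have hy : (y : G) ∈ (H : Set G) * (K : Set G) := by
      rw [← Subgroup.normal_mul H K]
      exact y.2
    obtain ⟨h, hh, k, hk, hhk⟩ := hy
    refine ⟨⟨k, hk⟩, ?_⟩
    simp only [MonoidHom.comp_apply, QuotientGroup.mk'_apply]
    rw [QuotientGroup.eq]
    refine Subgroup.mem_subgroupOf.mpr ?_
    have : ((inclusion (le_sup_right : K ≤ L)) ⟨k, hk⟩ : G) = k := rfl
    simp only [Subgroup.coe_mul, Subgroup.coe_inv, this]
    have : (y : G) = h * k := hhk.symm
    rw [this]
    have : k⁻¹ * (h * k) = k⁻¹ * h * k := by group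
    rw [this]
    simpa using hHn.conj_mem h hh k⁻¹
  haveI : Group.IsSolvable (L ⧸ H.subgroupOf L) :=
    solvable_of_surjective hsurj
  exact solvable_of_ker_le_range (inclusion (le_sup_left : H ≤ L))
    (QuotientGroup.mk' (H.subgroupOf L))
    (by rw [QuotientGroup.ker_mk', Subgroup.inclusion_range])

lemma radical_le {H : Subgroup G} (hn : H.Normal) (hs : IsSolvable H) :
    H ≤ solvableRadical G :=
  le_sSup ⟨hn, hs⟩

lemma radical_solvable (G : Type*) [Group G] [Finite G] :
    IsSolvable ↥(solvableRadical G) := by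
  classical
  set S : Set (Subgroup G) := {H : Subgroup G | H.Normal ∧ IsSolvable H} with hS
  haveI : Finite (Subgroup G) :=
    Finite.of_injective (fun H => (H : Set G)) SetLike.coe_injective
  obtain ⟨M, hM, hMmax⟩ := Set.Finite.exists_maximalFor id S (Set.toFinite S)
    ⟨⊥, inferInstance, (inferInstance : Group.IsSolvable (⊥ : Subgroup G))⟩
  have hrad : solvableRadical G = M := by
    apply le_antisymm
    · apply sSup_le
      intro H hH
      haveI := hH.1; haveI : Group.IsSolvable H := hH.2; haveI := hM.1; haveI : Group.IsSolvable M := hM.2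
      have hmem : H ⊔ M ∈ S := ⟨Subgroup.sup_normal H M, sup_solvable H M⟩
      have := hMmax hmem le_sup_right
      simp only [id] at this
      exact le_sup_left.trans this
    · exact le_sSup hM
  rw [hrad]
  exact hM.2

lemma radical_map_le (φ : G ≃* G) :
    (solvableRadical G).map φ.toMonoidHom ≤ solvableRadical G := by
  rw [solvableRadical, (Subgroup.gc_map_comap φ.toMonoidHom).l_sSup]
  apply iSup₂_le
  intro H hH
  haveI : Group.IsSolvable H := hH.2
  refine le_sSup ⟨hH.1.map φ.toMonoidHom φ.surjective, ?_⟩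
  exact solvable_of_surjective
    (f := (Subgroup.equivMapOfInjective H φ.toMonoidHom φ.injective).toMonoidHom)
    (Subgroup.equivMapOfInjective H φ.toMonoidHom φ.injective).surjective

lemma radical_map (φ : G ≃* G) :
    (solvableRadical G).map φ.toMonoidHom = solvableRadical G := by
  apply le_antisymm (radical_map_le φ)
  have h2 := radical_map_le φ.symm
  have : solvableRadical G =
      ((solvableRadical G).map φ.symm.toMonoidHom).map φ.toMonoidHom := by
    rw [Subgroup.map_map]
    have : φ.toMonoidHom.comp φ.symm.toMonoidHom = MonoidHom.id G := by
      ext x; simp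
    rw [this, Subgroup.map_id]
  calc solvableRadical G
      = ((solvableRadical G).map φ.symm.toMonoidHom).map φ.toMonoidHom := this
    _ ≤ (solvableRadical G).map φ.toMonoidHom := Subgroup.map_mono h2

instance radical_normal : (solvableRadical G).Normal := by
  constructor
  intro x hx g
  have h := radical_map (MulAut.conj g : MulAut G)
  have : g * x * g⁻¹ = (MulAut.conj g) x := by simp [MulAut.conj_apply]
  rw [this, ← h]
  exact Subgroup.mem_map_of_mem _ hx

/-- The `k`-th derived subgroup of the solvable radical, as a subgroup of `G`. -/
def radD (G : Type*) [Group G] (k : ℕ) : Subgroup G :=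
  (derivedSeries ↥(solvableRadical G) k).map (solvableRadical G).subtype

lemma radD_map (φ : G ≃* G) (k : ℕ) :
    (radD G k).map φ.toMonoidHom = radD G k := by
  set R := solvableRadical G with hR
  let e : ↥R ≃* ↥R := (φ.subgroupMap R).trans (MulEquiv.subgroupCongr (radical_map φ))
  have he : Function.Surjective e.toMonoidHom := e.surjective
  have hcomm : φ.toMonoidHom.comp R.subtype = R.subtype.comp e.toMonoidHom := by
    ext x; rfl
  rw [radD, Subgroup.map_map, hcomm, ← Subgroup.map_map]
  rw [map_derivedSeries_eq he]

instance radD_normal (k : ℕ) : (radD G k).Normal := by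
  constructor
  intro x hx g
  have h := radD_map (MulAut.conj g : MulAut G) k
  have : g * x * g⁻¹ = (MulAut.conj g) x := by simp [MulAut.conj_apply]
  rw [this, ← h]
  exact Subgroup.mem_map_of_mem _ hx

lemma derivedLength_le_of_le {A B : Subgroup G} (h : A ≤ B) (hB : IsSolvable ↥B) :
    derivedLength ↥A ≤ derivedLength ↥B := by
  have hne : {n : ℕ | derivedSeries ↥B n = ⊥}.Nonempty := by
    obtain ⟨n, hn⟩ := (isSolvable_def ↥B).mp hB
    exact ⟨n, hn⟩
  have hmem := Nat.sInf_mem hne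
  apply Nat.sInf_le
  show derivedSeries ↥A (derivedLength ↥B) = ⊥
  have h1 := map_derivedSeries_le_derivedSeries (Subgroup.inclusion h) (derivedLength ↥B)
  have h2 : derivedSeries ↥B (derivedLength ↥B) = ⊥ := hmem
  rw [h2] at h1
  rw [← Subgroup.map_eq_bot_iff_of_injective _ (Subgroup.inclusion_injective h)]
  exact le_bot_iff.mp h1



set_option maxHeartbeats 1000000 in
lemma fiber_bound [Fintype G] [DecidableEq G] (α : MulAut G)
    (N : Subgroup G) [hNn : N.Normal] [DecidablePred (· ∈ N)]
    (hNA : ¬ (∀ a ∈ N, ∀ b ∈ N, a * b = b * a))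
    (s : G) (hs : α s = s ^ 2) :
    4 * (univ.filter (fun n => n ∈ N ∧ α (s * n) = (s * n) ^ 2)).card ≤
      3 * (univ.filter (fun x => x ∈ N)).card := by
  classical
  by_contra hcon
  push_neg at hcon
  set T := univ.filter (fun n => n ∈ N ∧ α (s * n) = (s * n) ^ 2) with hT
  set Nf := univ.filter (fun x => x ∈ N) with hNf
  have hfil : ∀ (Kk : Subgroup G) (inst : DecidablePred (fun x => x ∈ Kk)),
      (@Finset.filter G (fun x => x ∈ Kk) inst univ).card = Nat.card Kk := by
    intro Kk inst
    rw [Nat.card_eq_fintype_card, Fintype.card_subtype]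
  have hTmem : ∀ n ∈ T, n ∈ N ∧ α (s * n) = (s * n) ^ 2 := by
    intro n hn; simpa [hT] using hn
  have hNfcard : Nf.card = Nat.card N := by rw [hNf]; exact hfil N _
  have hTN : T ⊆ Nf := by
    intro x hx
    simp only [hNf, mem_filter, mem_univ, true_and]
    exact (hTmem x hx).1
  -- Step 1 : on T, α n = (s⁻¹ * n * s) * n
  have hstep : ∀ n ∈ T, α n = s⁻¹ * n * s * n := by
    intro n hn
    have h1 : α s * α n = (s * n) ^ 2 := by rw [← map_mul]; exact (hTmem n hn).2
    have h2 : α n = (s ^ 2)⁻¹ * (s * n) ^ 2 := by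
      rw [← hs, ← h1]; group
    rw [h2]
    simp [pow_two, mul_inv_rev, mul_assoc]
  -- Step 2 : commutation relation
  have hcomm : ∀ m ∈ T, ∀ n ∈ T, m * n ∈ T → m * (s⁻¹ * n * s) = (s⁻¹ * n * s) * m := by
    intro m hm n hn hmn
    have e1 : (s⁻¹ * m * s * m) * (s⁻¹ * n * s * n) = s⁻¹ * (m * n) * s * (m * n) := by
      rw [← hstep m hm, ← hstep n hn, ← map_mul, hstep (m * n) hmn]
    have e2 : (s⁻¹ * m * s) * (m * (s⁻¹ * n * s)) * n
        = (s⁻¹ * m * s) * ((s⁻¹ * n * s) * m) * n := by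
      calc (s⁻¹ * m * s) * (m * (s⁻¹ * n * s)) * n
          = (s⁻¹ * m * s * m) * (s⁻¹ * n * s * n) := by group
        _ = s⁻¹ * (m * n) * s * (m * n) := e1
        _ = (s⁻¹ * m * s) * ((s⁻¹ * n * s) * m) * n := by group
    exact mul_left_cancel (mul_right_cancel e2)
  -- Step 3/4 : each conjugate s⁻¹ n s centralizes N
  have hcent : ∀ n ∈ T, s⁻¹ * n * s ∈ Subgroup.centralizer (N : Set G) := by
    intro n hn
    set U := T.filter (fun m => m * n ∈ T) with hU
    have hUcard : Nf.card < 2 * U.card := by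
      have himg : (T \ U).image (· * n) ⊆ Nf \ T := by
        intro x hx
        simp only [mem_image] at hx
        obtain ⟨m, hm, rfl⟩ := hx
        simp only [mem_sdiff, hU, mem_filter] at hm
        have hmT : m ∈ T := hm.1
        have hmnT : m * n ∉ T := fun hc => hm.2 ⟨hm.1, hc⟩
        refine mem_sdiff.mpr ⟨?_, hmnT⟩
        simp only [hNf, mem_filter, mem_univ, true_and]
        exact mul_mem (hTmem m hmT).1 (hTmem n hn).1
      have h1 : (T \ U).card ≤ (Nf \ T).card := by
        calc (T \ U).card = ((T \ U).image (· * n)).card :=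
            (Finset.card_image_of_injective _ (mul_left_injective n)).symm
          _ ≤ (Nf \ T).card := Finset.card_le_card himg
      have h2 : (Nf \ T).card = Nf.card - T.card := Finset.card_sdiff_of_subset hTN
      have h3 : (T \ U).card = T.card - U.card := Finset.card_sdiff_of_subset (filter_subset _ _)
      have h4 : U.card ≤ T.card := card_le_card (filter_subset _ _)
      have h5 : T.card ≤ Nf.card := card_le_card hTN
      omega
    set Hg := Subgroup.centralizer {s⁻¹ * n * s} ⊓ N with hHg
    have hUH : ∀ m ∈ U, m ∈ Hg := by
      intro m hm
      simp only [hU, mem_filter] at hm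
      have hcm := hcomm m hm.1 n hn hm.2
      refine Subgroup.mem_inf.mpr ⟨?_, (hTmem m hm.1).1⟩
      rw [Subgroup.mem_centralizer_iff]
      intro h hh
      rw [Set.mem_singleton_iff] at hh
      rw [hh]
      exact hcm.symm
    have hUHg : U.card ≤ (univ.filter (fun x => x ∈ Hg)).card := by
      apply card_le_card
      intro m hm
      simp only [mem_filter, mem_univ, true_and]
      exact hUH m hm
    have hdvd : Nat.card Hg ∣ Nat.card N := Subgroup.card_dvd_of_le inf_le_right
    have hfilHg : (univ.filter (fun x => x ∈ Hg)).card = Nat.card Hg := hfil Hg _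
    have hlt : Nat.card N < 2 * Nat.card Hg := by omega
    have hcardeq : Nat.card N ≤ Nat.card Hg := by
      obtain ⟨c, hc⟩ := hdvd
      have hpos : 0 < Nat.card Hg := Nat.card_pos
      have hposN : 0 < Nat.card N := Nat.card_pos
      rcases c with _ | _ | c
      · omega
      · omega
      · have h2c : Nat.card Hg * 2 ≤ Nat.card Hg * (c + 1 + 1) :=
          Nat.mul_le_mul_left _ (by omega)
        omega
    have hHgN : Hg = N := Subgroup.eq_of_le_of_card_ge inf_le_right hcardeq
    rw [Subgroup.mem_centralizer_iff]
    intro b hb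
    have hbH : b ∈ Hg := hHgN.symm ▸ hb
    have hbc := (Subgroup.mem_inf.mp hbH).1
    rw [Subgroup.mem_centralizer_iff] at hbc
    exact (hbc _ rfl).symm
  -- Step 5 : N is abelian, contradiction
  set K := Subgroup.centralizer (N : Set G) ⊓ N with hK
  have hinjcard : T.card ≤ (univ.filter (fun x => x ∈ K)).card := by
    apply Finset.card_le_card_of_injOn (fun n => s⁻¹ * n * s)
    · intro n hn
      simp only [coe_filter, Set.mem_setOf_eq, mem_filter, mem_univ, true_and]
      refine Subgroup.mem_inf.mpr ⟨hcent n hn, ?_⟩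
      have := hNn.conj_mem n (hTmem n hn).1 s⁻¹
      simpa using this
    · intro a _ b _ hab
      have hab' : s⁻¹ * a * s = s⁻¹ * b * s := hab
      exact mul_left_cancel (mul_right_cancel hab')
  have hdvd : Nat.card K ∣ Nat.card N := Subgroup.card_dvd_of_le inf_le_right
  have hfilK : (univ.filter (fun x => x ∈ K)).card = Nat.card K := hfil K _
  have hlt : Nat.card N < 2 * Nat.card K := by omega
  have hcardeq : Nat.card N ≤ Nat.card K := by
    obtain ⟨c, hc⟩ := hdvd
    have hpos : 0 < Nat.card K := Nat.card_pos
    have hposN : 0 < Nat.card N := Nat.card_pos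
    rcases c with _ | _ | c
    · omega
    · omega
    · have h2c : Nat.card K * 2 ≤ Nat.card K * (c + 1 + 1) :=
        Nat.mul_le_mul_left _ (by omega)
      omega
  have hKN : K = N := Subgroup.eq_of_le_of_card_ge inf_le_right hcardeq
  apply hNA
  intro a ha b hb
  have haK : a ∈ K := hKN.symm ▸ ha
  have := (Subgroup.mem_inf.mp haK).1
  rw [Subgroup.mem_centralizer_iff] at this
  exact (this b hb).symm

set_option maxHeartbeats 1000000 in
lemma quotient_bound [Fintype G] [DecidableEq G] (α : MulAut G) (N : Subgroup G) [hNn : N.Normal]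
    (hNA : ¬ (∀ a ∈ N, ∀ b ∈ N, a * b = b * a))
    (β : MulAut (G ⧸ N)) (hcompat : ∀ g : G, β (QuotientGroup.mk g) = QuotientGroup.mk (α g)) :
    4 * Nat.card {g : G // α g = g ^ 2} ≤
      3 * Nat.card N * Nat.card {x : G ⧸ N // β x = x ^ 2} := by
  classical
  letI hfG : Fintype (G ⧸ N) := Fintype.ofFinite _
  letI : DecidableEq (G ⧸ N) := Classical.decEq _
  have hS : Nat.card {g : G // α g = g ^ 2} = (univ.filter (fun g : G => α g = g ^ 2)).card := by
    rw [Nat.card_eq_fintype_card, Fintype.card_subtype]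
  have hSbar : Nat.card {x : G ⧸ N // β x = x ^ 2}
      = (univ.filter (fun x : G ⧸ N => β x = x ^ 2)).card := by
    rw [Nat.card_eq_fintype_card, Fintype.card_subtype]
  have hfilN : (univ.filter (fun x => x ∈ N)).card = Nat.card N := by
    rw [Nat.card_eq_fintype_card, Fintype.card_subtype]
  set Sf := univ.filter (fun g : G => α g = g ^ 2) with hSf
  set Sbar := univ.filter (fun x : G ⧸ N => β x = x ^ 2) with hSbarf
  rw [hS, hSbar]
  have himg : Sf.image (QuotientGroup.mk : G → G ⧸ N) ⊆ Sbar := by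
    intro b hb
    obtain ⟨s₀, hs₀, rfl⟩ := mem_image.mp hb
    have hs₀' : α s₀ = s₀ ^ 2 := by simpa [hSf] using hs₀
    simp only [hSbarf, mem_filter, mem_univ, true_and]
    rw [hcompat, hs₀']
    rfl
  calc 4 * Sf.card
      = 4 * ∑ b ∈ Sf.image (QuotientGroup.mk : G → G ⧸ N),
          (Sf.filter (fun g => QuotientGroup.mk g = b)).card := by
        rw [← Finset.card_eq_sum_card_image]
    _ = ∑ b ∈ Sf.image (QuotientGroup.mk : G → G ⧸ N),
          4 * (Sf.filter (fun g => QuotientGroup.mk g = b)).card := by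
        rw [Finset.mul_sum]
    _ ≤ ∑ _b ∈ Sf.image (QuotientGroup.mk : G → G ⧸ N), 3 * Nat.card N := by
        apply Finset.sum_le_sum
        intro b hb
        obtain ⟨s₀, hs₀, rfl⟩ := mem_image.mp hb
        have hs₀' : α s₀ = s₀ ^ 2 := by simpa [hSf] using hs₀
        have hbij : (Sf.filter (fun g => (QuotientGroup.mk g : G ⧸ N) = QuotientGroup.mk s₀)).card
            = (univ.filter (fun n => n ∈ N ∧ α (s₀ * n) = (s₀ * n) ^ 2)).card := by
          apply Finset.card_bij' (fun g _ => s₀⁻¹ * g) (fun n _ => s₀ * n)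
          · intro g hg
            simp only [mem_filter, mem_univ, true_and, hSf] at hg ⊢
            obtain ⟨hg1, hg2⟩ := hg
            have hmem : s₀⁻¹ * g ∈ N := by
              have := QuotientGroup.eq.mp hg2
              simpa using (inv_mem this)
            refine ⟨hmem, ?_⟩
            rw [mul_inv_cancel_left]
            exact hg1
          · intro n hn
            simp only [mem_filter, mem_univ, true_and, hSf] at hn ⊢
            exact ⟨hn.2, QuotientGroup.mk_mul_of_mem s₀ hn.1⟩
          · intro g _; rw [mul_inv_cancel_left]
          · intro n _; rw [inv_mul_cancel_left]
        rw [hbij, ← hfilN]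
        exact fiber_bound α N hNA s₀ hs₀'
    _ = (Sf.image (QuotientGroup.mk : G → G ⧸ N)).card * (3 * Nat.card N) := by
        rw [Finset.sum_const, smul_eq_mul]
    _ ≤ Sbar.card * (3 * Nat.card N) := by
        exact Nat.mul_le_mul_right _ (Finset.card_le_card himg)
    _ = 3 * Nat.card N * Sbar.card := by ring

set_option maxHeartbeats 2000000 in
lemma key : ∀ (n : ℕ) (G : Type) [Group G] [Finite G] (_ : Nat.card G ≤ n) (α : MulAut G),
    3 * (Nat.card {g : G // α g = g ^ 2} : ℝ) ^ 2 ≤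
      4 * (3 / 4 : ℝ) ^ (derivedLength ↥(solvableRadical G)) * (Nat.card G : ℝ) ^ 2 := by
  intro n
  induction n with
  | zero =>
    intro G _ _ hle α
    have : 0 < Nat.card G := Nat.card_pos
    omega
  | succ n ih =>
    intro G _ _ hle α
    classical
    letI : Fintype G := Fintype.ofFinite G
    letI : DecidableEq G := Classical.decEq G
    set R := solvableRadical G with hR
    set d := derivedLength ↥R with hd
    have hScard : (Nat.card {g : G // α g = g ^ 2} : ℝ) ≤ (Nat.card G : ℝ) := by
      have : Nat.card {g : G // α g = g ^ 2} ≤ Nat.card G := by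
        rw [Nat.card_eq_fintype_card, Nat.card_eq_fintype_card]
        exact Fintype.card_subtype_le _
      exact_mod_cast this
    have hGpos : (0:ℝ) < (Nat.card G : ℝ) := by exact_mod_cast (Nat.card_pos : 0 < Nat.card G)
    have hSnn : (0:ℝ) ≤ (Nat.card {g : G // α g = g ^ 2} : ℝ) := by positivity
    rcases le_or_gt d 1 with hd1 | hd2
    · -- d ≤ 1 : trivial bound
      have hp : ((3:ℝ)/4) ^ (1:ℕ) ≤ (3/4 : ℝ) ^ d :=
        pow_le_pow_of_le_one (by norm_num) (by norm_num) hd1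
      have hp1 : ((3:ℝ)/4) ^ (1:ℕ) = 3/4 := pow_one _
      nlinarith [sq_nonneg ((Nat.card G : ℝ))]
    · -- d ≥ 2
      have hsolv : Group.IsSolvable ↥R := radical_solvable G
      have hne : {k : ℕ | derivedSeries ↥R k = ⊥}.Nonempty := by
        obtain ⟨m, hm⟩ := (isSolvable_def ↥R).mp hsolv
        exact ⟨m, hm⟩
      have hdbot : derivedSeries ↥R d = ⊥ := Nat.sInf_mem hne
      have hmin : ∀ k, k < d → derivedSeries ↥R k ≠ ⊥ := fun k hk =>
        Nat.notMem_of_lt_sInf hk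
      have hnonabel : ∀ k : ℕ, derivedSeries ↥R (k+1) ≠ ⊥ →
          ¬ (∀ a ∈ radD G k, ∀ b ∈ radD G k, a * b = b * a) := by
        intro k hk hcomm
        apply hk
        have hcbot : ⁅radD G k, radD G k⁆ = ⊥ := by
          rw [Subgroup.commutator_eq_bot_iff_le_centralizer]
          intro x hx
          rw [Subgroup.mem_centralizer_iff]
          intro y hy
          exact hcomm y hy x hx
        rw [radD, ← Subgroup.map_commutator] at hcbot
        have := (Subgroup.map_eq_bot_iff_of_injective _ R.subtype_injective).mp hcbot
        rw [← derivedSeries_succ] at this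
        exact this
      -- the set S as a filter
      have hSfcard : Nat.card {g : G // α g = g ^ 2}
          = (univ.filter (fun g : G => α g = g ^ 2)).card := by
        rw [Nat.card_eq_fintype_card, Fintype.card_subtype]
      rcases le_or_gt d 3 with hd3 | hd4
      · -- 2 ≤ d ≤ 3 : G is nonabelian, use the 3/4 bound directly
        have hGna : ¬ (∀ a ∈ (⊤ : Subgroup G), ∀ b ∈ (⊤ : Subgroup G), a * b = b * a) := by
          intro hcomm
          have h1 := hnonabel 0 (by rw [zero_add]; exact hmin 1 hd2)
          exact h1 (fun a _ b _ => hcomm a trivial b trivial)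
        have hfb := fiber_bound α ⊤ hGna 1 (by simp)
        have hT1 : (univ.filter (fun n : G => n ∈ (⊤ : Subgroup G) ∧ α (1 * n) = (1 * n) ^ 2))
            = univ.filter (fun g : G => α g = g ^ 2) := by
          apply Finset.filter_congr
          intro x _
          simp [one_mul]
        have hN1 : (univ.filter (fun x : G => x ∈ (⊤ : Subgroup G))) = (univ : Finset G) := by
          apply Finset.filter_true_of_mem
          intro x _
          trivial
        rw [hT1, hN1] at hfb
        have hkey : (4:ℝ) * (Nat.card {g : G // α g = g ^ 2} : ℝ) ≤ 3 * (Nat.card G : ℝ) := by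
          have : (univ : Finset G).card = Nat.card G := by
            rw [Nat.card_eq_fintype_card, Finset.card_univ]
          rw [hSfcard]
          exact_mod_cast (this ▸ hfb)
        have hp : ((3:ℝ)/4) ^ (3:ℕ) ≤ (3/4 : ℝ) ^ d :=
          pow_le_pow_of_le_one (by norm_num) (by norm_num) hd3
        have hp' : (27/64 : ℝ) ≤ (3/4:ℝ)^d := by
          have : ((3:ℝ)/4) ^ (3:ℕ) = 27/64 := by norm_num
          linarith
        have hS34 : (Nat.card {g : G // α g = g ^ 2} : ℝ) ≤ 3/4 * (Nat.card G : ℝ) := by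
          linarith
        have hsq : (Nat.card {g : G // α g = g ^ 2} : ℝ)^2 ≤ (3/4 * (Nat.card G : ℝ))^2 :=
          pow_le_pow_left₀ hSnn hS34 2
        have hfin : (27/64:ℝ) * (Nat.card G:ℝ)^2 ≤ (3/4:ℝ)^d * (Nat.card G:ℝ)^2 := by
          nlinarith [sq_nonneg ((Nat.card G : ℝ))]
        nlinarith [hsq, hfin]
      · -- d ≥ 4 : induction step
        set N := radD G (d - 2) with hN
        haveI hNnorm : N.Normal := radD_normal (d - 2)
        have hNbot : N ≠ ⊥ := by
          intro hb
          exact hmin (d - 2) (by omega)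
            ((Subgroup.map_eq_bot_iff_of_injective _ R.subtype_injective).mp hb)
        have hNA : ¬ (∀ a ∈ N, ∀ b ∈ N, a * b = b * a) := by
          have h1 : derivedSeries ↥R ((d - 2) + 1) ≠ ⊥ := by
            have : (d - 2) + 1 = d - 1 := by omega
            rw [this]
            exact hmin (d - 1) (by omega)
          exact hnonabel (d - 2) h1
        have hmapN : N.map (α : G ≃* G).toMonoidHom = N := radD_map (α : G ≃* G) (d - 2)
        set β : MulAut (G ⧸ N) := QuotientGroup.congr N N (α : G ≃* G) hmapN with hβ
        have hcompat : ∀ g : G, β (QuotientGroup.mk g) = QuotientGroup.mk ((α : G ≃* G) g) :=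
          fun g => rfl
        have hquot := quotient_bound α N hNA β hcompat
        -- cardinalities
        have hGNcard : Nat.card G = Nat.card (G ⧸ N) * Nat.card N :=
          Subgroup.card_eq_card_quotient_mul_card_subgroup N
        have hNlt : 1 < Nat.card N := (Subgroup.one_lt_card_iff_ne_bot N).mpr hNbot
        have hQpos : 0 < Nat.card (G ⧸ N) := Nat.card_pos
        have hQle : Nat.card (G ⧸ N) ≤ n := by
          have h2 : Nat.card (G ⧸ N) * 1 < Nat.card (G ⧸ N) * Nat.card N := by
            apply Nat.mul_lt_mul_of_le_of_lt (le_refl _) hNlt hQpos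
          omega
        have hIH := ih (G ⧸ N) hQle β
        -- derived length bookkeeping
        set dbar := derivedLength ↥(solvableRadical (G ⧸ N)) with hdbar
        have hQradsolv : IsSolvable ↥(solvableRadical (G ⧸ N)) := radical_solvable _
        set Q : Subgroup (G ⧸ N) := R.map (QuotientGroup.mk' N) with hQdef
        have hQsolv : IsSolvable ↥Q :=
          solvable_of_surjective (f := (QuotientGroup.mk' N).subgroupMap R)
            (MonoidHom.subgroupMap_surjective _ _)
        have hQnormal : Q.Normal :=
          (radical_normal).map (QuotientGroup.mk' N) (QuotientGroup.mk'_surjective N)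
        have hQle' : Q ≤ solvableRadical (G ⧸ N) := radical_le hQnormal hQsolv
        have hdl1 : derivedLength ↥Q ≤ dbar := derivedLength_le_of_le hQle' hQradsolv
        have hdl2 : d - 2 ≤ derivedLength ↥Q := by
          set k := derivedLength ↥Q with hk
          have hkne : {m : ℕ | derivedSeries ↥Q m = ⊥}.Nonempty := by
            obtain ⟨m, hm⟩ := (isSolvable_def ↥Q).mp hQsolv
            exact ⟨m, hm⟩
          have hkbot : derivedSeries ↥Q k = ⊥ := Nat.sInf_mem hkne
          have hsurj : Function.Surjective ((QuotientGroup.mk' N).subgroupMap R) :=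
            MonoidHom.subgroupMap_surjective _ _
          have hmapds : (derivedSeries ↥R k).map ((QuotientGroup.mk' N).subgroupMap R)
              = derivedSeries ↥Q k := map_derivedSeries_eq hsurj k
          have hker : derivedSeries ↥R k ≤ ((QuotientGroup.mk' N).subgroupMap R).ker := by
            rw [← Subgroup.map_eq_bot_iff]
            rw [hmapds]
            exact hkbot
          have hkerEq : ((QuotientGroup.mk' N).subgroupMap R).ker = derivedSeries ↥R (d - 2) := by
            ext x
            have h1 : x ∈ ((QuotientGroup.mk' N).subgroupMap R).ker
                ↔ (QuotientGroup.mk (x : G) : G ⧸ N) = 1 := by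
              rw [MonoidHom.mem_ker]
              constructor
              · intro hx
                have := congrArg (Subtype.val) hx
                simpa using this
              · intro hx
                apply Subtype.ext
                simpa using hx
            rw [h1, QuotientGroup.eq_one_iff]
            constructor
            · intro hx
              obtain ⟨y, hy, hyx⟩ := hx
              have : y = x := Subtype.ext (by simpa using hyx)
              rwa [← this]
            · intro hx
              exact ⟨x, hx, rfl⟩
          rw [hkerEq] at hker
          -- two more derived steps land in ⊥
          have hstep1 : derivedSeries ↥R (k + 1) ≤ derivedSeries ↥R (d - 1) := by
            have e : d - 1 = (d - 2) + 1 := by omega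
            rw [e, derivedSeries_succ, derivedSeries_succ]
            exact Subgroup.commutator_mono hker hker
          have hstep2 : derivedSeries ↥R (k + 2) ≤ derivedSeries ↥R d := by
            have e : d = (d - 1) + 1 := by omega
            rw [e]
            show derivedSeries ↥R ((k + 1) + 1) ≤ derivedSeries ↥R ((d - 1) + 1)
            rw [derivedSeries_succ, derivedSeries_succ]
            exact Subgroup.commutator_mono hstep1 hstep1
          have hbot2 : derivedSeries ↥R (k + 2) = ⊥ :=
            le_bot_iff.mp (hstep2.trans_eq hdbot)
          have : d ≤ k + 2 := Nat.sInf_le hbot2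
          omega
        have hdbar2 : d - 2 ≤ dbar := le_trans hdl2 hdl1
        -- real arithmetic
        have ha : (0:ℝ) ≤ (Nat.card {g : G // α g = g ^ 2} : ℝ) := hSnn
        have hb : (0:ℝ) ≤ (Nat.card {x : G ⧸ N // β x = x ^ 2} : ℝ) := by positivity
        have hc : (0:ℝ) < (Nat.card N : ℝ) := by
          exact_mod_cast (Nat.card_pos : 0 < Nat.card N)
        have hq : (0:ℝ) < (Nat.card (G ⧸ N) : ℝ) := by exact_mod_cast hQpos
        have hquotR : (Nat.card {g : G // α g = g ^ 2} : ℝ) ≤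
            3/4 * (Nat.card N : ℝ) * (Nat.card {x : G ⧸ N // β x = x ^ 2} : ℝ) := by
          have := hquot
          have hcast : (4:ℝ) * (Nat.card {g : G // α g = g ^ 2} : ℝ) ≤
              3 * (Nat.card N : ℝ) * (Nat.card {x : G ⧸ N // β x = x ^ 2} : ℝ) := by
            exact_mod_cast this
          linarith
        -- (3/4)^dbar ≤ (3/4)^(d-2)
        have hpow : ((3:ℝ)/4) ^ dbar ≤ ((3:ℝ)/4) ^ (d - 2) :=
          pow_le_pow_of_le_one (by norm_num) (by norm_num) hdbar2
        have hpowpos : (0:ℝ) < ((3:ℝ)/4) ^ (d - 2) := by positivity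
        -- square the coset bound
        have hsq : (Nat.card {g : G // α g = g ^ 2} : ℝ)^2 ≤
            (3/4 * (Nat.card N : ℝ) * (Nat.card {x : G ⧸ N // β x = x ^ 2} : ℝ))^2 :=
          pow_le_pow_left₀ ha hquotR 2
        -- IH in convenient form
        have hIH' : 3 * (Nat.card {x : G ⧸ N // β x = x ^ 2} : ℝ) ^ 2 ≤
            4 * ((3:ℝ)/4) ^ (d - 2) * (Nat.card (G ⧸ N) : ℝ) ^ 2 := by
          calc 3 * (Nat.card {x : G ⧸ N // β x = x ^ 2} : ℝ) ^ 2
              ≤ 4 * ((3:ℝ)/4) ^ dbar * (Nat.card (G ⧸ N) : ℝ) ^ 2 := hIH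
            _ ≤ 4 * ((3:ℝ)/4) ^ (d - 2) * (Nat.card (G ⧸ N) : ℝ) ^ 2 := by
                apply mul_le_mul_of_nonneg_right _ (by positivity)
                linarith
        -- rewrite (3/4)^d and |G|
        have hdsplit : ((3:ℝ)/4) ^ d = ((3:ℝ)/4) ^ (d - 2) * (9/16) := by
          have e : d = (d - 2) + 2 := by omega
          rw [e]
          rw [pow_add]
          norm_num
        have hGprod : (Nat.card G : ℝ) = (Nat.card (G ⧸ N) : ℝ) * (Nat.card N : ℝ) := by
          exact_mod_cast hGNcard
        rw [hdsplit, hGprod]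
        nlinarith [hsq, hIH', mul_pos hc hq, sq_nonneg ((Nat.card N : ℝ)),
          sq_nonneg ((Nat.card (G ⧸ N) : ℝ)), mul_le_mul_of_nonneg_left hIH'
            (mul_nonneg (le_of_lt hpowpos) (sq_nonneg ((Nat.card N : ℝ))))]

/-- If a finite group `G` has an automorphism squaring at least
`ρ·|G|` many elements, then `dl(Rad(G)) ≤ 2·log_{3/4}(ρ) + 1`. -/
theorem stmt_7 (ρ : ℝ) (hρ0 : 0 < ρ) (hρ1 : ρ ≤ 1)
    (G : Type) [Group G] [Finite G] (α : MulAut G)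
    (h : ρ * (Nat.card G : ℝ) ≤ (Nat.card {g : G // α g = g ^ 2} : ℝ)) :
    (derivedLength (solvableRadical G) : ℝ) ≤
      2 * (Real.log ρ / Real.log (3 / 4)) + 1 := by
  have hlogρ : Real.log ρ ≤ 0 := Real.log_nonpos (le_of_lt hρ0) hρ1
  have hlog34 : Real.log (3/4 : ℝ) < 0 := Real.log_neg (by norm_num) (by norm_num)
  set d := derivedLength ↥(solvableRadical G) with hd
  have hquot_nonneg : 0 ≤ Real.log ρ / Real.log (3/4 : ℝ) := by
    have := div_nonneg (neg_nonneg.mpr hlogρ) (neg_nonneg.mpr (le_of_lt hlog34))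
    rwa [neg_div_neg_eq] at this
  rcases le_or_gt d 1 with hd1 | hd2
  · have : (d : ℝ) ≤ 1 := by exact_mod_cast hd1
    linarith
  · -- use the key inequality
    have hkey := key (Nat.card G) G (le_refl _) α
    have hGpos : (0:ℝ) < (Nat.card G : ℝ) := by
      exact_mod_cast (Nat.card_pos : 0 < Nat.card G)
    have hSnn : (0:ℝ) ≤ (Nat.card {g : G // α g = g ^ 2} : ℝ) := by positivity
    have hρG : (0:ℝ) ≤ ρ * (Nat.card G : ℝ) := by positivity
    have hsq : (ρ * (Nat.card G : ℝ))^2 ≤ (Nat.card {g : G // α g = g ^ 2} : ℝ)^2 :=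
      pow_le_pow_left₀ hρG h 2
    have hkey2 : 3 * (ρ * (Nat.card G : ℝ))^2 ≤ 4 * ((3:ℝ)/4) ^ d * (Nat.card G : ℝ)^2 := by
      calc 3 * (ρ * (Nat.card G : ℝ))^2 ≤ 3 * (Nat.card {g : G // α g = g ^ 2} : ℝ)^2 := by
            linarith
        _ ≤ 4 * ((3:ℝ)/4) ^ d * (Nat.card G : ℝ)^2 := hkey
    have hρ2 : ρ^2 ≤ ((3:ℝ)/4) ^ (d - 1) := by
      have hG2 : (0:ℝ) < (Nat.card G : ℝ)^2 := by positivity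
      have h3 : 3 * ρ^2 ≤ 4 * ((3:ℝ)/4) ^ d := by
        have := hkey2
        rw [mul_pow] at this
        have h4 : 3 * ρ^2 * (Nat.card G : ℝ)^2 ≤ 4 * ((3:ℝ)/4) ^ d * (Nat.card G : ℝ)^2 := by
          linarith
        exact le_of_mul_le_mul_right (by linarith) hG2
      have hdsplit : ((3:ℝ)/4) ^ d = (3/4) * ((3:ℝ)/4) ^ (d - 1) := by
        have e' : d - 1 + 1 = d := by omega
        conv_lhs => rw [← e']
        rw [pow_succ, mul_comm]
      rw [hdsplit] at h3
      linarith
    -- take logs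
    have hρ2pos : (0:ℝ) < ρ^2 := by positivity
    have hlog : Real.log (ρ^2) ≤ Real.log (((3:ℝ)/4) ^ (d - 1)) :=
      Real.log_le_log hρ2pos hρ2
    rw [Real.log_pow, Real.log_pow] at hlog
    -- hlog : 2 * log ρ ≤ (d-1) * log (3/4)
    have hdiv : ((d : ℝ) - 1) ≤ 2 * Real.log ρ / Real.log (3/4 : ℝ) := by
      rw [le_div_iff_of_neg hlog34]
      have hcast : ((d - 1 : ℕ) : ℝ) = (d : ℝ) - 1 := by
        rw [Nat.cast_sub (by omega : 1 ≤ d)]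
        norm_num
      calc ((d:ℝ) - 1) * Real.log (3/4 : ℝ) = ((d - 1 : ℕ) : ℝ) * Real.log (3/4 : ℝ) := by
            rw [hcast]
        _ ≥ (2:ℕ) * Real.log ρ := hlog
        _ = 2 * Real.log ρ := by norm_num
    have : 2 * Real.log ρ / Real.log (3/4 : ℝ) = 2 * (Real.log ρ / Real.log (3/4 : ℝ)) := by
      ring
    linarith [hdiv, this ▸ hdiv]
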